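/- For every C∞ diffeomorphism ν of ℝⁿ with ν(0) = 0, every n×n real matrix E, every m ≥ 1 and all indices 1 ≤ p, q₁, …, q_m ≤ n, the function t ↦ ∂_{q_m}⋯∂_{q_1}[x ↦ exp(−tE)·ν(exp(tE)·x)]^p(0) is differentiable at t = 0, with derivative Σ_{s=1}^m Σ_{u=1}^n E^u_{q_s}·∂_{q_m}⋯∂_u⋯∂_{q_1}ν^p(0) (the index q_s replaced by u) − Σ_{r=1}^n E^p_r·∂_{q_m}⋯∂_{q_1}ν^r(0). -/

import Mathlib

/-- A `C^∞` diffeomorphism of `ℝⁿ` (modeled as `Fin n → ℝ`). -/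
structure Diffeo (n : ℕ) where
  toFun : (Fin n → ℝ) → (Fin n → ℝ)
  invFun : (Fin n → ℝ) → (Fin n → ℝ)
  smooth : ContDiff ℝ (⊤ : ℕ∞) toFun
  smooth_inv : ContDiff ℝ (⊤ : ℕ∞) invFun
  left_inv : Function.LeftInverse invFun toFun
  right_inv : Function.RightInverse invFun toFun

/-- Partial derivative in the `j`-th coordinate direction. -/
noncomputable def pd {n : ℕ} (j : Fin n) (f : (Fin n → ℝ) → ℝ) : (Fin n → ℝ) → ℝ :=
  fun x => fderiv ℝ f x (Pi.single j 1)

/-- Iterated partial derivative `∂_{q_m}⋯∂_{q_1}`, with `q 0 = q_1` applied first. -/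
noncomputable def itpd {n : ℕ} :
    ∀ {k : ℕ}, (Fin k → Fin n) → ((Fin n → ℝ) → ℝ) → ((Fin n → ℝ) → ℝ)
  | 0, _, f => f
  | _ + 1, j, f => itpd (fun m => j m.succ) (pd (j 0) f)

section Aux

theorem pd_contDiff' {n : ℕ} {f : (Fin n → ℝ) → ℝ} (hf : ContDiff ℝ (⊤ : ℕ∞) f)
    (j : Fin n) : ContDiff ℝ (⊤ : ℕ∞) (pd j f) :=
  (hf.fderiv_right (m := (⊤ : ℕ∞)) (by simp)).clm_apply contDiff_const

theorem itpd_contDiff' {n : ℕ} : ∀ {k : ℕ} (q : Fin k → Fin n) {f : (Fin n → ℝ) → ℝ},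
    ContDiff ℝ (⊤ : ℕ∞) f → ContDiff ℝ (⊤ : ℕ∞) (itpd q f)
  | 0, _, _, hf => hf
  | _ + 1, q, _, hf => itpd_contDiff' (fun m => q m.succ) (pd_contDiff' hf (q 0))

theorem ContDiff.diffble' {n : ℕ} {f : (Fin n → ℝ) → ℝ} (hf : ContDiff ℝ (⊤ : ℕ∞) f) :
    Differentiable ℝ f := hf.differentiable (by simp)

theorem pd_sum' {n : ℕ} {ι : Type*} [Fintype ι] (c : ι → ℝ) (f : ι → (Fin n → ℝ) → ℝ)
    (hf : ∀ i, Differentiable ℝ (f i)) (j : Fin n) (x : Fin n → ℝ) :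
    pd j (fun y => ∑ i : ι, c i * f i y) x = ∑ i : ι, c i * pd j (f i) x := by
  unfold pd
  rw [fderiv_fun_sum (fun i _ => ((hf i).differentiableAt).const_mul (c i))]
  simp only [ContinuousLinearMap.sum_apply]
  congr 1
  ext i
  rw [fderiv_const_mul ((hf i).differentiableAt)]
  rfl

theorem itpd_sum' {n : ℕ} {ι : Type*} [Fintype ι] :
    ∀ {k : ℕ} (q : Fin k → Fin n) (c : ι → ℝ) (f : ι → (Fin n → ℝ) → ℝ),
    (∀ i, ContDiff ℝ (⊤ : ℕ∞) (f i)) → ∀ x,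
    itpd q (fun y => ∑ i : ι, c i * f i y) x = ∑ i : ι, c i * itpd q (f i) x
  | 0, _, _, _, _, _ => rfl
  | k + 1, q, c, f, hf, x => by
    show itpd (fun m => q m.succ) (pd (q 0) (fun y => ∑ i : ι, c i * f i y)) x = _
    have h1 : pd (q 0) (fun y => ∑ i : ι, c i * f i y)
        = fun y => ∑ i : ι, c i * pd (q 0) (f i) y :=
      funext fun y => pd_sum' c f (fun i => (hf i).diffble') (q 0) y
    rw [h1, itpd_sum' (fun m => q m.succ) c (fun i => pd (q 0) (f i))
      (fun i => pd_contDiff' (hf i) (q 0)) x]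
    rfl

noncomputable def mvCLM {n : ℕ} (M : Matrix (Fin n) (Fin n) ℝ) :
    (Fin n → ℝ) →L[ℝ] (Fin n → ℝ) :=
  LinearMap.toContinuousLinearMap M.mulVecLin

@[simp] theorem mvCLM_apply {n : ℕ} (M : Matrix (Fin n) (Fin n) ℝ) (x : Fin n → ℝ) :
    mvCLM M x = M.mulVec x := rfl

theorem pd_comp_mulVec' {n : ℕ} {f : (Fin n → ℝ) → ℝ} (hf : Differentiable ℝ f)
    (M : Matrix (Fin n) (Fin n) ℝ) (j : Fin n) (x : Fin n → ℝ) :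
    pd j (fun y => f (M.mulVec y)) x = ∑ u : Fin n, M u j * pd u f (M.mulVec x) := by
  have hc : (fun y => f (M.mulVec y)) = f ∘ (mvCLM M) := rfl
  unfold pd
  rw [hc, fderiv_comp x (hf.differentiableAt) ((mvCLM M).differentiable.differentiableAt)]
  rw [(mvCLM M).fderiv]
  simp only [ContinuousLinearMap.coe_comp', Function.comp_apply, mvCLM_apply]
  have h1 : M.mulVec (Pi.single j 1) = ∑ u : Fin n, M u j • (Pi.single u 1 : Fin n → ℝ) := by
    rw [Matrix.mulVec_single]
    ext u
    simp [Finset.sum_apply, Pi.single_apply, mul_comm]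
  rw [h1, map_sum]
  simp [ContinuousLinearMap.map_smul, mul_comm]

theorem itpd_cons' {n k : ℕ} (u : Fin n) (b : Fin k → Fin n) (f : (Fin n → ℝ) → ℝ) :
    itpd (Fin.cons u b) f = itpd b (pd u f) := by
  have h1 : (fun m : Fin k => (Fin.cons u b : Fin (k+1) → Fin n) m.succ) = b :=
    funext fun m => by simp
  conv_lhs => rw [itpd]
  rw [h1, Fin.cons_zero]

theorem itpd_comp_mulVec' {n : ℕ} :
    ∀ {k : ℕ} (q : Fin k → Fin n) {f : (Fin n → ℝ) → ℝ},
    ContDiff ℝ (⊤ : ℕ∞) f → ∀ (M : Matrix (Fin n) (Fin n) ℝ) (x : Fin n → ℝ),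
    itpd q (fun y => f (M.mulVec y)) x
      = ∑ a : Fin k → Fin n, (∏ s, M (a s) (q s)) * itpd a f (M.mulVec x)
  | 0, q, f, hf, M, x => by
    simp only [Finset.univ_unique, Finset.sum_singleton, Finset.univ_eq_empty,
      Finset.prod_empty, one_mul]
    rfl
  | k + 1, q, f, hf, M, x => by
    show itpd (fun m => q m.succ) (pd (q 0) (fun y => f (M.mulVec y))) x = _
    have h1 : pd (q 0) (fun y => f (M.mulVec y))
        = fun y => ∑ u : Fin n, M u (q 0) * pd u f (M.mulVec y) :=
      funext fun y => pd_comp_mulVec' hf.diffble' M (q 0) y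
    have hsm : ∀ u : Fin n, ContDiff ℝ (⊤ : ℕ∞) (fun y => pd u f (M.mulVec y)) :=
      fun u => (pd_contDiff' hf u).comp (mvCLM M).contDiff
    rw [h1, itpd_sum' (fun m => q m.succ) (fun u => M u (q 0))
      (fun u y => pd u f (M.mulVec y)) hsm x]
    have h2 : ∀ u : Fin n, itpd (fun m => q m.succ) (fun y => pd u f (M.mulVec y)) x
        = ∑ b : Fin k → Fin n, (∏ s, M (b s) (q s.succ)) * itpd b (pd u f) (M.mulVec x) :=
      fun u => itpd_comp_mulVec' (fun m => q m.succ) (pd_contDiff' hf u) M x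
    simp only [h2, Finset.mul_sum]
    rw [← Fintype.sum_prod_type']
    apply Fintype.sum_equiv (Fin.consEquiv (fun _ => Fin n))
    intro ⟨u, b⟩
    rw [show ((Fin.consEquiv fun _ => Fin n) (u, b) : Fin (k+1) → Fin n) = Fin.cons u b from rfl]
    rw [Fin.prod_univ_succ]
    simp only [Fin.cons_zero, Fin.cons_succ, itpd_cons']
    ring

theorem exp_entry_deriv' (n : ℕ) (E : Matrix (Fin n) (Fin n) ℝ) (i j : Fin n) :
    HasDerivAt (fun t : ℝ => (NormedSpace.exp (t • E)) i j) (E i j) 0 := by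
  letI : SeminormedRing (Matrix (Fin n) (Fin n) ℝ) := Matrix.linftyOpSemiNormedRing
  letI : NormedRing (Matrix (Fin n) (Fin n) ℝ) := Matrix.linftyOpNormedRing
  letI : NormedAlgebra ℝ (Matrix (Fin n) (Fin n) ℝ) := Matrix.linftyOpNormedAlgebra
  have h : HasDerivAt (fun t : ℝ => NormedSpace.exp (t • E))
      (NormedSpace.exp ((0:ℝ) • E) * E) 0 := hasDerivAt_exp_smul_const E 0
  rw [zero_smul, NormedSpace.exp_zero, one_mul] at h
  let L : Matrix (Fin n) (Fin n) ℝ →ₗ[ℝ] ℝ :=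
    { toFun := fun A => A i j, map_add' := fun _ _ => rfl, map_smul' := fun _ _ => rfl }
  let Lc : Matrix (Fin n) (Fin n) ℝ →L[ℝ] ℝ := LinearMap.toContinuousLinearMap L
  have := (Lc.hasFDerivAt.comp 0 h.hasFDerivAt).hasDerivAt
  refine this.congr_deriv ?_
  show ((1:ℝ) • E) i j = E i j
  simp

theorem exp_entry_deriv_neg' (n : ℕ) (E : Matrix (Fin n) (Fin n) ℝ) (i j : Fin n) :
    HasDerivAt (fun t : ℝ => (NormedSpace.exp (-(t • E))) i j) (-(E i j)) 0 := by
  have h := exp_entry_deriv' n (-E) i j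
  simp only [smul_neg] at h
  simpa using h

theorem sum_delta' {m n : ℕ} (q : Fin m → Fin n) (h : (Fin m → Fin n) → ℝ) :
    ∑ a : Fin m → Fin n, (∏ s, if a s = q s then (1:ℝ) else 0) * h a = h q := by
  rw [Finset.sum_eq_single q]
  · simp
  · intro a _ ha
    obtain ⟨s, hs⟩ := Function.ne_iff.mp ha
    rw [Finset.prod_eq_zero (Finset.mem_univ s)
      (if_neg hs : (if a s = q s then (1:ℝ) else 0) = 0), zero_mul]
  · simp

theorem sum_delta_update' {m n : ℕ} (q : Fin m → Fin n) (s' : Fin m) (g : Fin n → ℝ)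
    (h : (Fin m → Fin n) → ℝ) :
    ∑ a : Fin m → Fin n,
      (∏ s ∈ Finset.univ.erase s', if a s = q s then (1:ℝ) else 0) * (g (a s') * h a)
      = ∑ u : Fin n, g u * h (Function.update q s' u) := by
  have hinj : Set.InjOn (fun u => Function.update q s' u) ↑(Finset.univ : Finset (Fin n)) := by
    intro u _ u' _ huu
    have := congrFun huu s'
    simpa using this
  rw [← Finset.sum_subset (Finset.subset_univ
      ((Finset.univ : Finset (Fin n)).image (fun u => Function.update q s' u)))]
  · rw [Finset.sum_image (fun u hu u' hu' => hinj hu hu')]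
    apply Finset.sum_congr rfl
    intro u _
    have h1 : ∏ s ∈ Finset.univ.erase s',
        (if Function.update q s' u s = q s then (1:ℝ) else 0) = 1 := by
      apply Finset.prod_eq_one
      intro s hs
      rw [Function.update_of_ne (Finset.ne_of_mem_erase hs), if_pos rfl]
    rw [h1, one_mul, Function.update_self]
  · intro a _ ha
    have h2 : a ≠ Function.update q s' (a s') := by
      intro hc
      exact ha (Finset.mem_image.mpr ⟨a s', Finset.mem_univ _, hc.symm⟩)
    obtain ⟨s, hs⟩ := Function.ne_iff.mp h2
    have hss' : s ≠ s' := by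
      intro hc; subst hc; simp at hs
    rw [Function.update_of_ne hss'] at hs
    rw [Finset.prod_eq_zero (Finset.mem_erase.mpr ⟨hss', Finset.mem_univ s⟩)
      (if_neg hs : (if a s = q s then (1:ℝ) else 0) = 0), zero_mul]

end Aux

/-- Infinitesimal `glₙ`-action on Taylor coordinates: for `ν ∈ G†` and an `n×n` matrix
`E`, the function `t ↦ ∂_{q_m}⋯∂_{q_1}[x ↦ exp(−tE)·ν(exp(tE)·x)]^p(0)` is
differentiable at `t = 0` with derivative
`Σ_{s,u} E^u_{q_s}·∂_{q_m}⋯∂_u⋯∂_{q_1}ν^p(0) − Σ_r E^p_r·∂_{q_m}⋯∂_{q_1}ν^r(0)`. -/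
theorem itpd_infinitesimal_gl_action (n : ℕ) (ν : Diffeo n) (hν : ν.toFun 0 = 0)
    (E : Matrix (Fin n) (Fin n) ℝ) (m : ℕ) (hm : 1 ≤ m)
    (p : Fin n) (q : Fin m → Fin n) :
    HasDerivAt
      (fun t : ℝ =>
        itpd q
          (fun x =>
            ((NormedSpace.exp (-(t • E))).mulVec
              (ν.toFun ((NormedSpace.exp (t • E)).mulVec x))) p) 0)
      ((∑ s : Fin m, ∑ u : Fin n,
          E u (q s) * itpd (Function.update q s u) (fun x => ν.toFun x p) 0) -
        ∑ r : Fin n, E p r * itpd q (fun x => ν.toFun x r) 0)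
      0 := by
  have hg := ν.smooth
  have hgr : ∀ r : Fin n, ContDiff ℝ (⊤ : ℕ∞) (fun y => ν.toFun y r) :=
    fun r => (ContinuousLinearMap.proj (R := ℝ) (φ := fun _ : Fin n => ℝ) r).contDiff.comp hg
  -- Step 1: rewrite the function of t explicitly
  have hΦ : ∀ t : ℝ,
      itpd q (fun x => ((NormedSpace.exp (-(t • E))).mulVec
          (ν.toFun ((NormedSpace.exp (t • E)).mulVec x))) p) 0
      = ∑ r : Fin n, (NormedSpace.exp (-(t • E))) p r *
          ∑ a : Fin m → Fin n, (∏ s, (NormedSpace.exp (t • E)) (a s) (q s)) *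
            itpd a (fun y => ν.toFun y r) 0 := by
    intro t
    set A := NormedSpace.exp (-(t • E)) with hA
    set M := NormedSpace.exp (t • E) with hM
    have hfun : (fun x => (A.mulVec (ν.toFun (M.mulVec x))) p)
        = fun x => ∑ r : Fin n, A p r * (fun y => ν.toFun y r) (M.mulVec x) := by
      funext x
      simp [Matrix.mulVec, dotProduct]
    rw [hfun, itpd_sum' q (fun r => A p r) (fun r x => (fun y => ν.toFun y r) (M.mulVec x))
      (fun r => (hgr r).comp (mvCLM M).contDiff) 0]
    apply Finset.sum_congr rfl
    intro r _
    rw [itpd_comp_mulVec' q (hgr r) M 0, Matrix.mulVec_zero]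
  rw [show (fun t : ℝ => itpd q (fun x => ((NormedSpace.exp (-(t • E))).mulVec
      (ν.toFun ((NormedSpace.exp (t • E)).mulVec x))) p) 0)
    = fun t : ℝ => ∑ r : Fin n, (NormedSpace.exp (-(t • E))) p r *
        ∑ a : Fin m → Fin n, (∏ s, (NormedSpace.exp (t • E)) (a s) (q s)) *
          itpd a (fun y => ν.toFun y r) 0 from funext hΦ]
  -- Step 2: differentiate the explicit expression
  have hD := HasDerivAt.fun_sum (u := (Finset.univ : Finset (Fin n)))
    (x := (0:ℝ)) (fun r _ => HasDerivAt.mul (exp_entry_deriv_neg' n E p r)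
      (HasDerivAt.fun_sum (u := (Finset.univ : Finset (Fin m → Fin n)))
        (fun a _ => HasDerivAt.mul_const
          (HasDerivAt.fun_finsetProd (u := (Finset.univ : Finset (Fin m)))
            (fun s _ => exp_entry_deriv' n E (a s) (q s)))
          (itpd a (fun y => ν.toFun y r) 0))))
  simp only [zero_smul, neg_zero, NormedSpace.exp_zero, Matrix.one_apply, smul_eq_mul, Pi.mul_apply] at hD
  convert hD using 1
  case e'_4 => rfl
  case e'_5 => rfl
  -- Step 3: the algebra of deltas
  rw [Finset.sum_add_distrib]
  have hA : ∑ r : Fin n, -(E p r) * ((∑ a : Fin m → Fin n,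
      (∏ s, if a s = q s then (1:ℝ) else 0) * itpd a (fun y => ν.toFun y r) 0))
      = -∑ r : Fin n, E p r * itpd q (fun y => ν.toFun y r) 0 := by
    rw [← Finset.sum_neg_distrib]
    apply Finset.sum_congr rfl
    intro r _
    rw [sum_delta' q (fun a => itpd a (fun y => ν.toFun y r) 0), neg_mul]
  rw [hA]
  have hB : (∑ r : Fin n, (if p = r then (1:ℝ) else 0) *
      (∑ a : Fin m → Fin n, (∑ s : Fin m,
        (∏ j ∈ Finset.univ.erase s, if a j = q j then (1:ℝ) else 0) * E (a s) (q s)) *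
          itpd a (fun y => ν.toFun y r) 0))
      = ∑ a : Fin m → Fin n, (∑ s : Fin m,
        (∏ j ∈ Finset.univ.erase s, if a j = q j then (1:ℝ) else 0) * E (a s) (q s)) *
          itpd a (fun y => ν.toFun y p) 0 := by
    simp
  rw [hB]
  have hX : (∑ a : Fin m → Fin n, (∑ s : Fin m,
        (∏ j ∈ Finset.univ.erase s, if a j = q j then (1:ℝ) else 0) * E (a s) (q s)) *
          itpd a (fun y => ν.toFun y p) 0)
      = ∑ s : Fin m, ∑ u : Fin n,
          E u (q s) * itpd (Function.update q s u) (fun y => ν.toFun y p) 0 := by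
    simp only [Finset.sum_mul]
    rw [Finset.sum_comm]
    apply Finset.sum_congr rfl
    intro s _
    rw [← sum_delta_update' q s (fun u => E u (q s))
      (fun a => itpd a (fun y => ν.toFun y p) 0)]
    apply Finset.sum_congr rfl
    intro a _
    ring
  rw [hX]
  ring
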